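/- arXiv:1902.01100 — 2 statements merged into one kernel-verified Lean document; each statement's English description precedes it below -/
import Mathlib

section
/- For every t ≥ 0, the set A_t possesses a unique greatest element with respect to the relation ⪕; that is, there exists exactly one vector F(t) ∈ A_t such that a ⪕ F(t) for every a ∈ A_t. -/
/-- The set of indices at which `a` attains its minimum. -/
noncomputable def argminSet {n : ℕ} (a : Fin n → ℝ) : Finset (Fin n) :=
  Finset.univ.filter (fun i => ∀ j, a i ≤ a j)

/-- The minimum entry of `a`. -/
noncomputable def minval {n : ℕ} (a : Fin n → ℝ) : ℝ := ⨅ i, a i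

/-- The restriction of `a` to the indices in `S`, reindexed by `Fin S.card`
in increasing order. -/
noncomputable def restrictVec {n : ℕ} (S : Finset (Fin n)) (a : Fin n → ℝ) :
    Fin S.card → ℝ :=
  fun i => a (S.orderIsoOfFin rfl i).1

/-- The "min-sensitive" partial order `⪕` on `ℝⁿ` (Definition 1 of the paper):
for `n = 1` it is the usual order; for `n ≥ 2`, `a ⪕ b` iff (i) `a = b`, or
(ii) `min a < min b`, or (iii) `min a = min b` and `Argmin b ⊊ Argmin a`, or
(iv) `min a = min b`, `Argmin a = Argmin b ⊊ {1,...,n}` and the restrictions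
of `a` and `b` to the complement of the common argmin set are related. -/
noncomputable def msLE : (n : ℕ) → (Fin n → ℝ) → (Fin n → ℝ) → Prop
  | 0, _, _ => True
  | 1, a, b => a 0 ≤ b 0
  | n + 2, a, b =>
    a = b ∨
    minval a < minval b ∨
    (minval a = minval b ∧ argminSet b ⊂ argminSet a) ∨
    (minval a = minval b ∧ argminSet a = argminSet b ∧ argminSet a ⊂ Finset.univ ∧
      msLE ((argminSet a)ᶜ).card (restrictVec (argminSet a)ᶜ a) (restrictVec (argminSet a)ᶜ b))
termination_by n => n
decreasing_by
  have hne : (argminSet a).Nonempty := by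
    obtain ⟨i, -, hi⟩ := Finset.exists_min_image Finset.univ a ⟨0, Finset.mem_univ 0⟩
    refine ⟨i, ?_⟩
    unfold argminSet
    exact Finset.mem_filter.mpr ⟨Finset.mem_univ i, fun j => hi j (Finset.mem_univ j)⟩
  have h1 : 0 < (argminSet a).card := Finset.card_pos.mpr hne
  have h2 : ((argminSet a)ᶜ).card = Fintype.card (Fin (n + 2)) - (argminSet a).card :=
    Finset.card_compl _
  simp only [Fintype.card_fin] at h2
  omega

/-- `x*_i`: the supremum of the zero set of a function. -/
noncomputable def xstar (f : ℝ → ℝ) : ℝ := sSup {x | f x = 0}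

/-- The admissible set `A_t`. -/
def admissible (I J : ℕ) (h : Fin I → ℝ → ℝ) (G : Fin J → Finset (Fin I)) (t : ℝ) :
    Set (Fin I → ℝ) :=
  {a | (∀ i, a i ≤ t) ∧ ∀ j, (∑ i ∈ G j, h i (a i)) ≤ t}

/-- `F` is the `⪕`-greatest element of `A_t`. -/
def IsGreatestMS (I J : ℕ) (h : Fin I → ℝ → ℝ) (G : Fin J → Finset (Fin I)) (t : ℝ)
    (F : Fin I → ℝ) : Prop :=
  F ∈ admissible I J h G t ∧ ∀ a ∈ admissible I J h G t, msLE I a F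

section Basics
variable {n : ℕ}

lemma mem_argminSet_iff {a : Fin n → ℝ} {i : Fin n} :
    i ∈ argminSet a ↔ ∀ j, a i ≤ a j := by
  simp [argminSet]

lemma argminSet_nonempty (hn : 0 < n) (a : Fin n → ℝ) : (argminSet a).Nonempty := by
  obtain ⟨i, -, hi⟩ := Finset.exists_min_image Finset.univ a ⟨⟨0, hn⟩, Finset.mem_univ _⟩
  exact ⟨i, mem_argminSet_iff.mpr fun j => hi j (Finset.mem_univ j)⟩

lemma minval_le (a : Fin n → ℝ) (j : Fin n) : minval a ≤ a j :=
  ciInf_le (Set.finite_range a).bddBelow j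

lemma minval_eq_of_forall {a : Fin n → ℝ} {i : Fin n} (hi : ∀ j, a i ≤ a j) :
    minval a = a i := by
  haveI : Nonempty (Fin n) := ⟨i⟩
  exact le_antisymm (minval_le a i) (le_ciInf hi)

lemma eq_minval_of_mem {a : Fin n → ℝ} {i : Fin n} (hi : i ∈ argminSet a) :
    a i = minval a :=
  (minval_eq_of_forall (mem_argminSet_iff.mp hi)).symm

lemma mem_argminSet_of_eq {a : Fin n → ℝ} {i : Fin n} (hi : a i = minval a) :
    i ∈ argminSet a :=
  mem_argminSet_iff.mpr fun j => hi ▸ minval_le a j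

lemma le_minval {a : Fin n → ℝ} {c : ℝ} (hn : 0 < n) (hc : ∀ i, c ≤ a i) :
    c ≤ minval a := by
  haveI : Nonempty (Fin n) := ⟨⟨0, hn⟩⟩
  exact le_ciInf hc

lemma minval_lt_of_not_mem {a : Fin n → ℝ} {i : Fin n}
    (hi : i ∉ argminSet a) : minval a < a i := by
  rcases lt_or_ge (minval a) (a i) with h | h
  · exact h
  · exact absurd (mem_argminSet_of_eq (le_antisymm h (minval_le a i))) hi

lemma minval_continuous (hn : 0 < n) : Continuous fun a : Fin n → ℝ => minval a := by
  haveI : Nonempty (Fin n) := ⟨⟨0, hn⟩⟩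
  have hne : (Finset.univ : Finset (Fin n)).Nonempty := Finset.univ_nonempty
  have heq : (fun a : Fin n → ℝ => minval a)
      = fun a => Finset.univ.inf' hne (fun i => a i) := by
    funext a
    refine le_antisymm ?_ (le_ciInf fun j => Finset.inf'_le _ (Finset.mem_univ j))
    obtain ⟨i, -, hi⟩ := Finset.exists_mem_eq_inf' hne a
    rw [hi]; exact minval_le a i
  rw [heq]
  exact Continuous.finset_inf'_apply hne (fun i _ => continuous_apply i)

/-- fundamental equality for the restriction at preimage index -/
lemma restrictVec_apply (S : Finset (Fin n)) (a : Fin n → ℝ) (j : Fin S.card) :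
    restrictVec S a j = a (S.orderIsoOfFin rfl j).1 := rfl

lemma restrictVec_apply_symm (S : Finset (Fin n)) (a : Fin n → ℝ) {i : Fin n}
    (hi : i ∈ S) :
    restrictVec S a ((S.orderIsoOfFin rfl).symm ⟨i, hi⟩) = a i := by
  rw [restrictVec_apply]
  congr 1
  exact congrArg Subtype.val ((S.orderIsoOfFin rfl).apply_symm_apply ⟨i, hi⟩)

end Basics
section MsLE

lemma minval_fin_zero (a b : Fin 0 → ℝ) : minval a = minval b := by
  unfold minval
  congr 1
  funext i
  exact absurd i.2 (by omega)

lemma minval_fin_one (a : Fin 1 → ℝ) : minval a = a 0 :=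
  minval_eq_of_forall fun j => by rw [Subsingleton.elim j 0]

lemma msLE_minval_le {n : ℕ} {a b : Fin n → ℝ} (hab : msLE n a b) :
    minval a ≤ minval b := by
  match n with
  | 0 => exact (minval_fin_zero a b).le
  | 1 => rw [msLE] at hab; rw [minval_fin_one, minval_fin_one]; exact hab
  | n + 2 =>
    rw [msLE] at hab
    rcases hab with rfl | h | ⟨h, -⟩ | ⟨h, -⟩
    · exact le_refl _
    · exact h.le
    · exact h.le
    · exact h.le

lemma msLE_antisymm : ∀ n (a b : Fin n → ℝ), msLE n a b → msLE n b a → a = b := by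
  intro n
  induction n using Nat.strong_induction_on with
  | _ n ih =>
    match n with
    | 0 => intro a b _ _; funext i; exact absurd i.2 (by omega)
    | 1 =>
      intro a b hab hba
      rw [msLE] at hab hba
      funext i
      rw [Subsingleton.elim i 0]
      exact le_antisymm hab hba
    | n + 2 =>
      intro a b hab hba
      rw [msLE] at hab hba
      rcases hab with rfl | h | ⟨h, hS⟩ | ⟨h, hS, hSu, hrec⟩
      · rfl
      · rcases hba with rfl | h' | ⟨h', -⟩ | ⟨h', -⟩ <;> linarith
      · rcases hba with rfl | h' | ⟨h', hS'⟩ | ⟨h', hS', -⟩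
        · rfl
        · linarith
        · exact absurd (hS.trans hS') (ssubset_irrefl _)
        · exact absurd (hS'.symm ▸ hS : argminSet b ⊂ argminSet b) (ssubset_irrefl _)
      · rcases hba with rfl | h' | ⟨h', hS'⟩ | ⟨h', hS', hSu', hrec'⟩
        · rfl
        · linarith
        · exact absurd (hS ▸ hS' : argminSet a ⊂ argminSet a) (ssubset_irrefl _)
        · -- both case (iv)
          have hcard : ((argminSet a)ᶜ).card < n + 2 := by
            have h1 : 0 < (argminSet a).card :=
              Finset.card_pos.mpr (argminSet_nonempty (by omega) a)
            have h2 := Finset.card_compl (argminSet a)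
            simp only [Fintype.card_fin] at h2
            omega
          rw [← hS] at hrec'
          have heq := ih _ hcard _ _ hrec hrec'
          funext i
          by_cases hi : i ∈ argminSet a
          · rw [eq_minval_of_mem hi, h, eq_minval_of_mem (hS ▸ hi : i ∈ argminSet b)]
          · have hi' : i ∈ (argminSet a)ᶜ := Finset.mem_compl.mpr hi
            have := congrFun heq (((argminSet a)ᶜ.orderIsoOfFin rfl).symm ⟨i, hi'⟩)
            rwa [restrictVec_apply_symm, restrictVec_apply_symm] at this

end MsLE
section StepAB

/-- Step A: on a nonempty closed bounded-above set, `minval` attains its max. -/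
lemma exists_maxmin {n : ℕ} (hn : 0 < n) (A : Set (Fin n → ℝ)) (hne : A.Nonempty)
    (hclosed : IsClosed A) (T : ℝ) (hT : ∀ a ∈ A, ∀ i, a i ≤ T) :
    ∃ F₀ ∈ A, ∀ a ∈ A, minval a ≤ minval F₀ := by
  obtain ⟨a₀, ha₀⟩ := hne
  set K : Set (Fin n → ℝ) := A ∩ Set.univ.pi (fun _ => Set.Icc (minval a₀) T) with hK
  have hKc : IsCompact K :=
    (isCompact_univ_pi (fun _ => isCompact_Icc)).inter_left hclosed
  have ha₀K : a₀ ∈ K :=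
    ⟨ha₀, fun i _ => ⟨minval_le a₀ i, hT a₀ ha₀ i⟩⟩
  obtain ⟨F₀, hF₀K, hF₀max⟩ := hKc.exists_isMaxOn ⟨a₀, ha₀K⟩
    ((minval_continuous hn).continuousOn)
  refine ⟨F₀, hF₀K.1, fun a ha => ?_⟩
  by_cases hc : minval a₀ ≤ minval a
  · exact hF₀max ⟨ha, fun i _ => ⟨hc.trans (minval_le a i), hT a ha i⟩⟩
  · exact (le_of_not_ge hc).trans (hF₀max ha₀K)

/-- Step B: an element of maximal `minval` whose argmin set is contained in
all others'. -/
lemma exists_min_argmin {n : ℕ} (hn : 0 < n) (A : Set (Fin n → ℝ))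
    (hmix : ∀ a ∈ A, ∀ b ∈ A, ∃ c ∈ A,
      (∀ i, a i = b i → c i = a i) ∧ (∀ i, a i ≠ b i → min (a i) (b i) < c i))
    (F₀ : Fin n → ℝ) (hF₀A : F₀ ∈ A) (hmax : ∀ a ∈ A, minval a ≤ minval F₀) :
    ∃ F₁ ∈ A, minval F₁ = minval F₀ ∧
      ∀ a ∈ A, minval a = minval F₀ → argminSet F₁ ⊆ argminSet a := by
  classical
  set m := minval F₀ with hm
  set cardSet : Set ℕ := {k | ∃ a, a ∈ A ∧ minval a = m ∧ (argminSet a).card = k}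
    with hcs
  have hcsne : cardSet.Nonempty := ⟨(argminSet F₀).card, F₀, hF₀A, rfl, rfl⟩
  obtain ⟨F₁, hF₁A, hF₁m, hF₁card⟩ := Nat.sInf_mem hcsne
  have hmin : ∀ a ∈ A, minval a = m → sInf cardSet ≤ (argminSet a).card :=
    fun a ha ham => Nat.sInf_le ⟨a, ha, ham, rfl⟩
  refine ⟨F₁, hF₁A, hF₁m, fun a ha ham => ?_⟩
  obtain ⟨c, hcA, hceq, hclt⟩ := hmix F₁ hF₁A a ha
  have hge : ∀ i, m ≤ c i := by
    intro i
    by_cases hi : F₁ i = a i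
    · rw [hceq i hi]; exact hF₁m ▸ minval_le F₁ i
    · have h1 := hclt i hi
      have h2 : m ≤ min (F₁ i) (a i) :=
        le_min (hF₁m ▸ minval_le F₁ i) (ham ▸ minval_le a i)
      linarith
  have hminc : minval c = m := le_antisymm (hmax c hcA) (le_minval hn hge)
  have hsub : ∀ i ∈ argminSet c, i ∈ argminSet F₁ ∧ i ∈ argminSet a := by
    intro i hi
    have hci : c i = m := (eq_minval_of_mem hi).trans hminc
    by_cases hFa : F₁ i = a i
    · have hFi : F₁ i = m := (hceq i hFa) ▸ hci
      exact ⟨mem_argminSet_of_eq (hFi.trans hF₁m.symm),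
        mem_argminSet_of_eq ((hFa ▸ hFi : a i = m).trans ham.symm)⟩
    · have h1 := hclt i hFa
      have h2 : m ≤ min (F₁ i) (a i) :=
        le_min (hF₁m ▸ minval_le F₁ i) (ham ▸ minval_le a i)
      rw [hci] at h1; linarith
  have h1 : argminSet c ⊆ argminSet F₁ := fun i hi => (hsub i hi).1
  have h2 : argminSet c = argminSet F₁ :=
    Finset.eq_of_subset_of_card_le h1 (hF₁card ▸ hmin c hcA hminc)
  exact fun i hi => (hsub i (h2 ▸ hi)).2

end StepAB
theorem abstract_greatest :
    ∀ n (A : Set (Fin n → ℝ)), A.Nonempty → IsClosed A →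
    (∃ T, ∀ a ∈ A, ∀ i, a i ≤ T) →
    (∀ a ∈ A, ∀ b ∈ A, ∃ c ∈ A,
      (∀ i, a i = b i → c i = a i) ∧ (∀ i, a i ≠ b i → min (a i) (b i) < c i)) →
    ∃ F ∈ A, ∀ a ∈ A, msLE n a F := by
  intro n
  induction n using Nat.strong_induction_on with
  | _ n ih =>
    intro A hne hclosed hbdd hmix
    obtain ⟨T, hT⟩ := hbdd
    match n with
    | 0 =>
      obtain ⟨F, hF⟩ := hne
      exact ⟨F, hF, fun a _ => by rw [msLE]; trivial⟩
    | 1 =>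
      obtain ⟨F₀, hF₀A, hmax⟩ := exists_maxmin one_pos A hne hclosed T hT
      refine ⟨F₀, hF₀A, fun a ha => ?_⟩
      rw [msLE]
      calc a 0 = minval a := (minval_fin_one a).symm
        _ ≤ minval F₀ := hmax a ha
        _ = F₀ 0 := minval_fin_one F₀
    | n + 2 =>
      have hn : 0 < n + 2 := by omega
      obtain ⟨F₀, hF₀A, hmax₀⟩ := exists_maxmin hn A hne hclosed T hT
      obtain ⟨F₁, hF₁A, hF₁m, hSsub⟩ := exists_min_argmin hn A hmix F₀ hF₀A hmax₀
      set m := minval F₁ with hm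
      have hmax : ∀ a ∈ A, minval a ≤ m := fun a ha => (hmax₀ a ha).trans_eq hF₁m.symm
      have hSsub' : ∀ a ∈ A, minval a = m → argminSet F₁ ⊆ argminSet a :=
        fun a ha ham => hSsub a ha (ham.trans hF₁m)
      set S := argminSet F₁ with hSdef
      have hSne : S.Nonempty := argminSet_nonempty hn F₁
      have hSm : ∀ i ∈ S, F₁ i = m := fun i hi => eq_minval_of_mem hi
      by_cases hSuniv : S = Finset.univ
      · refine ⟨F₁, hF₁A, fun a ha => ?_⟩
        rw [msLE]
        rcases (hmax a ha).lt_or_eq with hlt | heq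
        · exact Or.inr (Or.inl hlt)
        · left
          have hau : argminSet a = Finset.univ :=
            Finset.univ_subset_iff.mp (hSuniv ▸ hSsub' a ha heq)
          funext i
          have h1 : a i = m := (eq_minval_of_mem (hau ▸ Finset.mem_univ i)).trans heq
          have h2 : F₁ i = m := hSm i (hSuniv ▸ Finset.mem_univ i)
          rw [h1, h2]
      · have hSssub : S ⊂ Finset.univ := (Finset.subset_univ S).ssubset_of_ne hSuniv
        have hkpos : 0 < (Sᶜ).card := by
          rw [Finset.card_pos, Finset.nonempty_iff_ne_empty, Ne, Finset.compl_eq_empty_iff]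
          exact hSuniv
        have hklt : (Sᶜ).card < n + 2 := by
          have h1 : 0 < S.card := Finset.card_pos.mpr hSne
          have h2 := Finset.card_compl S
          simp only [Fintype.card_fin] at h2
          omega
        set e := (Sᶜ).orderIsoOfFin rfl with he
        set ext : (Fin (Sᶜ).card → ℝ) → Fin (n+2) → ℝ :=
          fun b i => if h : i ∈ Sᶜ then b (e.symm ⟨i, h⟩) else m with hext
        have hE1 : ∀ b j, ext b (e j).1 = b j := by
          intro b j
          have h2 := (e j).2
          rw [hext]
          simp only [dif_pos h2]
          congr 1
          rw [show (⟨(e j).1, h2⟩ : {x // x ∈ Sᶜ}) = e j from rfl]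
          exact e.symm_apply_apply j
        have hE2 : ∀ b i, i ∈ S → ext b i = m := by
          intro b i hi
          rw [hext]
          exact dif_neg (by simp [Finset.mem_compl, hi])
        have hE3 : ∀ b, restrictVec Sᶜ (ext b) = b := by
          intro b; funext j; exact hE1 b j
        have hE4 : ∀ a : Fin (n+2) → ℝ, (∀ i ∈ S, a i = m) →
            ext (restrictVec Sᶜ a) = a := by
          intro a ha
          funext i
          by_cases hi : i ∈ Sᶜ
          · rw [hext]; simp only [dif_pos hi]
            exact restrictVec_apply_symm Sᶜ a hi
          · rw [hext]; simp only [dif_neg hi]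
            exact (ha i (by simpa [Finset.mem_compl] using hi)).symm
        set B : Set (Fin (Sᶜ).card → ℝ) := {b | ext b ∈ A} with hB
        have hBne : restrictVec Sᶜ F₁ ∈ B := by
          show ext _ ∈ A
          rw [hE4 F₁ hSm]; exact hF₁A
        have hextcont : Continuous ext := by
          apply continuous_pi
          intro i
          by_cases hi : i ∈ Sᶜ
          · have : (fun b => ext b i) = fun b : Fin (Sᶜ).card → ℝ => b (e.symm ⟨i, hi⟩) := by
              funext b; rw [hext]; exact dif_pos hi
            rw [this]; exact continuous_apply _
          · have : (fun b => ext b i) = fun _ : Fin (Sᶜ).card → ℝ => m := by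
              funext b; rw [hext]; exact dif_neg hi
            rw [this]; exact continuous_const
        have hBclosed : IsClosed B := hclosed.preimage hextcont
        have hBbdd : ∃ T', ∀ b ∈ B, ∀ j, b j ≤ T' :=
          ⟨T, fun b hb j => by rw [← hE1 b j]; exact hT _ hb (e j).1⟩
        have hBmix : ∀ b ∈ B, ∀ b' ∈ B, ∃ c ∈ B,
            (∀ j, b j = b' j → c j = b j) ∧ (∀ j, b j ≠ b' j → min (b j) (b' j) < c j) := by
          intro b hb b' hb'
          obtain ⟨c, hcA, hceq, hclt⟩ := hmix _ hb _ hb'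
          have hcS : ∀ i ∈ S, c i = m := fun i hi =>
            (hceq i (by rw [hE2 b i hi, hE2 b' i hi])).trans (hE2 b i hi)
          refine ⟨restrictVec Sᶜ c, ?_, ?_, ?_⟩
          · show ext _ ∈ A
            rw [hE4 c hcS]; exact hcA
          · intro j hj
            have h5 : ext b (e j).1 = ext b' (e j).1 := by rw [hE1, hE1, hj]
            have h6 := hceq (e j).1 h5
            show c (e j).1 = b j
            rw [h6, hE1]
          · intro j hj
            have h5 : ext b (e j).1 ≠ ext b' (e j).1 := by rw [hE1, hE1]; exact hj
            have h6 := hclt (e j).1 h5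
            rw [hE1, hE1] at h6
            exact h6
        obtain ⟨F', hF'B, hF'max⟩ := ih _ hklt B ⟨_, hBne⟩ hBclosed hBbdd hBmix
        have hmlt : m < minval F' := by
          have h1 : msLE _ (restrictVec Sᶜ F₁) F' := hF'max _ hBne
          have h2 : m < minval (restrictVec Sᶜ F₁) := by
            obtain ⟨j₀, hj₀⟩ := argminSet_nonempty hkpos (restrictVec Sᶜ F₁)
            rw [← eq_minval_of_mem hj₀]
            have h3 : (e j₀).1 ∉ S := Finset.mem_compl.mp (e j₀).2
            exact minval_lt_of_not_mem (a := F₁) h3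
          exact h2.trans_le (msLE_minval_le h1)
        set F : Fin (n+2) → ℝ := ext F' with hF
        have hFA : F ∈ A := hF'B
        have hFs : ∀ i ∈ S, F i = m := fun i hi => hE2 F' i hi
        have hFns : ∀ i, i ∉ S → m < F i := by
          intro i hi
          have hi' : i ∈ Sᶜ := Finset.mem_compl.mpr hi
          have : F i = F' (e.symm ⟨i, hi'⟩) := by rw [hF, hext]; exact dif_pos hi'
          rw [this]
          exact hmlt.trans_le (minval_le F' _)
        have hFmin : minval F = m := by
          obtain ⟨i₀, hi₀⟩ := hSne
          refine le_antisymm ((minval_le F i₀).trans_eq (hFs i₀ hi₀)) ?_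
          refine le_minval hn fun i => ?_
          by_cases hi : i ∈ S
          · exact (hFs i hi).ge
          · exact (hFns i hi).le
        have hFargmin : argminSet F = S := by
          ext i
          constructor
          · intro hi
            by_contra hiS
            have := (eq_minval_of_mem hi).trans hFmin
            exact absurd this (ne_of_gt (hFns i hiS))
          · intro hi
            exact mem_argminSet_of_eq ((hFs i hi).trans hFmin.symm)
        refine ⟨F, hFA, fun a ha => ?_⟩
        rw [msLE]
        rcases (hmax a ha).lt_or_eq with hlt | heq
        · exact Or.inr (Or.inl (hlt.trans_eq hFmin.symm))
        · have hSa : S ⊆ argminSet a := hSsub' a ha heq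
          by_cases hcase : argminSet a = S
          · right; right; right
            refine ⟨heq.trans hFmin.symm, by rw [hcase, hFargmin], ?_, ?_⟩
            · rw [hcase]; exact hSssub
            · have haB : restrictVec Sᶜ a ∈ B := by
                show ext _ ∈ A
                rw [hE4 a (fun i hi => (eq_minval_of_mem (hSa hi)).trans heq)]
                exact ha
              have h5 := hF'max _ haB
              have h6 : restrictVec Sᶜ F = F' := hE3 F'
              rw [hcase, h6]
              exact h5
          · right; right; left
            exact ⟨heq.trans hFmin.symm,
              by rw [hFargmin]; exact hSa.ssubset_of_ne (Ne.symm hcase)⟩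
section Level

/-- Facts about the sublevel set of a continuous monotone function tending to ∞. -/
lemma level_facts (f : ℝ → ℝ) (hc : Continuous f) (hm : Monotone f)
    (ht : Filter.Tendsto f Filter.atTop Filter.atTop) (h0 : ∃ x, f x = 0)
    (v : ℝ) (hv : 0 ≤ v) :
    f (sSup {x | f x ≤ v}) ≤ v ∧
    (∀ y, f y ≤ v → y ≤ sSup {x | f x ≤ v}) ∧
    (∀ y, f y < v → y < sSup {x | f x ≤ v}) := by
  set Z := {x | f x ≤ v} with hZ
  have hZne : Z.Nonempty := by
    obtain ⟨x, hx⟩ := h0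
    exact ⟨x, by simp [hZ, hx, hv]⟩
  have hZbdd : BddAbove Z := by
    obtain ⟨z, hz⟩ := Filter.eventually_atTop.mp (ht.eventually_gt_atTop v)
    refine ⟨z, fun x hx => ?_⟩
    by_contra hzx
    push_neg at hzx
    exact absurd hx (by simp only [hZ, Set.mem_setOf_eq, not_le]; exact hz x hzx.le)
  have hZclosed : IsClosed Z := isClosed_le hc continuous_const
  have hmem : sSup Z ∈ Z := hZclosed.csSup_mem hZne hZbdd
  refine ⟨hmem, fun y hy => le_csSup hZbdd hy, fun y hy => ?_⟩
  have hopen : IsOpen {x | f x < v} := isOpen_lt hc continuous_const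
  obtain ⟨ε, hε, hball⟩ := Metric.isOpen_iff.mp hopen y hy
  have hmemb : y + ε / 2 ∈ Z := by
    have : y + ε / 2 ∈ Metric.ball y ε := by
      rw [Metric.mem_ball, Real.dist_eq]
      rw [show y + ε / 2 - y = ε / 2 by ring, abs_of_nonneg (by linarith : (0:ℝ) ≤ ε / 2)]
      linarith
    have h7 : f (y + ε / 2) < v := hball this
    exact h7.le
  calc y < y + ε / 2 := by linarith
    _ ≤ sSup Z := le_csSup hZbdd hmemb

end Level
section Final

theorem existsUnique_greatest'
    (I J : ℕ) (hI : 0 < I) (hJ : 0 < J)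
    (h : Fin I → ℝ → ℝ)
    (hcont : ∀ i, Continuous (h i))
    (hnonneg : ∀ i x, 0 ≤ h i x)
    (hmono : ∀ i, Monotone (h i))
    (htop : ∀ i, Filter.Tendsto (h i) Filter.atTop Filter.atTop)
    (hzero : ∀ i, ∃ x, h i x = 0)
    (hxle : ∀ i, xstar (h i) ≤ 0)
    (G : Fin J → Finset (Fin I))
    (hGinj : Function.Injective G)
    (hGne : ∀ j, (G j).Nonempty)
    (hGcover : ∀ i, ∃ j, i ∈ G j)
    (t : ℝ) (ht : 0 ≤ t) :
    ∃! F : Fin I → ℝ, IsGreatestMS I J h G t F := by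
  classical
  set A := admissible I J h G t with hA
  -- nonemptiness
  have hxz : ∀ i, h i (xstar (h i)) = 0 := by
    intro i
    have hfacts := level_facts (h i) (hcont i) (hmono i) (htop i) (hzero i) 0 le_rfl
    have : xstar (h i) = sSup {x | h i x ≤ 0} := by
      unfold xstar
      congr 1
      ext x
      simp only [Set.mem_setOf_eq]
      exact ⟨fun hx => hx.le, fun hx => le_antisymm hx (hnonneg i x)⟩
    rw [this]
    exact le_antisymm hfacts.1 (hnonneg i _)
  have hAne : A.Nonempty := by
    refine ⟨fun i => xstar (h i), fun i => (hxle i).trans ht, fun j => ?_⟩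
    have : ∀ i ∈ G j, h i (xstar (h i)) = 0 := fun i _ => hxz i
    rw [Finset.sum_congr rfl this, Finset.sum_const, smul_zero]
    exact ht
  -- closedness
  have hAclosed : IsClosed A := by
    have h1 : A = (⋂ i, {a : Fin I → ℝ | a i ≤ t}) ∩
        ⋂ j, {a : Fin I → ℝ | (∑ i ∈ G j, h i (a i)) ≤ t} := by
      ext a
      simp only [hA, admissible, Set.mem_inter_iff, Set.mem_iInter, Set.mem_setOf_eq]
    rw [h1]
    refine IsClosed.inter (isClosed_iInter fun i => isClosed_le (continuous_apply i)
      continuous_const) (isClosed_iInter fun j => isClosed_le ?_ continuous_const)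
    exact continuous_finset_sum _ fun i _ => (hcont i).comp (continuous_apply i)
  -- boundedness
  have hAbdd : ∃ T, ∀ a ∈ A, ∀ i, a i ≤ T := ⟨t, fun a ha i => ha.1 i⟩
  -- mix property
  have hAmix : ∀ a ∈ A, ∀ b ∈ A, ∃ c ∈ A,
      (∀ i, a i = b i → c i = a i) ∧ (∀ i, a i ≠ b i → min (a i) (b i) < c i) := by
    intro a ha b hb
    set v : Fin I → ℝ := fun i => (h i (a i) + h i (b i)) / 2 with hv
    have hv0 : ∀ i, 0 ≤ v i := fun i => by
      have := hnonneg i (a i); have := hnonneg i (b i)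
      rw [hv]; dsimp only; linarith
    set g : Fin I → ℝ := fun i => sSup {x | h i x ≤ v i} with hg
    set c : Fin I → ℝ := fun i => if a i = b i then a i else min t (g i) with hc
    have hfacts := fun i => level_facts (h i) (hcont i) (hmono i) (htop i) (hzero i)
      (v i) (hv0 i)
    -- each coordinate's h-value is at most v i
    have hkey : ∀ i, h i (c i) ≤ v i := by
      intro i
      rw [hc]; dsimp only
      by_cases hab : a i = b i
      · rw [if_pos hab, hv]; dsimp only; rw [hab]; linarith [le_refl (h i (b i))]
      · rw [if_neg hab]
        calc h i (min t (g i)) ≤ h i (g i) := hmono i (min_le_right _ _)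
          _ ≤ v i := (hfacts i).1
    -- strict increase at unequal coordinates
    have hstrict : ∀ i, a i ≠ b i → min (a i) (b i) < c i := by
      intro i hab
      rw [hc]; dsimp only
      rw [if_neg hab]
      have hmaxle : max (a i) (b i) ≤ t := max_le (ha.1 i) (hb.1 i)
      have hminmax : min (a i) (b i) < max (a i) (b i) := min_lt_max.mpr hab
      refine lt_min (lt_of_lt_of_le hminmax hmaxle) ?_
      rcases lt_trichotomy (h i (a i)) (h i (b i)) with hlt | heq | hgt
      · -- h(a i) < v i, and min = a i
        have hmin : min (a i) (b i) = a i := min_eq_left (by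
          by_contra hba
          push_neg at hba
          exact absurd (hmono i hba.le) (not_le.mpr hlt))
        rw [hmin]
        refine (hfacts i).2.2 (a i) ?_
        rw [hv]; dsimp only; linarith
      · -- both a i and b i in the sublevel set
        have h1 : a i ≤ g i := (hfacts i).2.1 (a i) (by rw [hv]; dsimp only; linarith)
        have h2 : b i ≤ g i := (hfacts i).2.1 (b i) (by rw [hv]; dsimp only; linarith)
        exact lt_of_lt_of_le hminmax (max_le h1 h2)
      · have hmin : min (a i) (b i) = b i := min_eq_right (by
          by_contra hba
          push_neg at hba
          exact absurd (hmono i hba.le) (not_le.mpr hgt))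
        rw [hmin]
        refine (hfacts i).2.2 (b i) ?_
        rw [hv]; dsimp only; linarith
    refine ⟨c, ⟨?_, ?_⟩, fun i hi => by rw [hc]; dsimp only; rw [if_pos hi], hstrict⟩
    · intro i
      rw [hc]; dsimp only
      by_cases hab : a i = b i
      · rw [if_pos hab]; exact ha.1 i
      · rw [if_neg hab]; exact min_le_left _ _
    · intro j
      have hsum : (∑ i ∈ G j, h i (c i)) ≤ ∑ i ∈ G j, v i :=
        Finset.sum_le_sum fun i _ => hkey i
      have hsplit : (∑ i ∈ G j, v i)
          = ((∑ i ∈ G j, h i (a i)) + ∑ i ∈ G j, h i (b i)) / 2 := by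
        rw [hv, ← Finset.sum_div, Finset.sum_add_distrib]
      have h1 := ha.2 j
      have h2 := hb.2 j
      rw [hsplit] at hsum
      linarith
  obtain ⟨F, hFA, hFmax⟩ := abstract_greatest I A hAne hAclosed hAbdd hAmix
  refine ⟨F, ⟨hFA, hFmax⟩, fun F' hF' => ?_⟩
  exact msLE_antisymm I F' F (hFmax F' hF'.1) (hF'.2 F hFA)

end Final

/-- for every `t ≥ 0` the set `A_t` has a unique `⪕`-greatest element. -/
theorem existsUnique_greatest
    (I J : ℕ) (hI : 0 < I) (hJ : 0 < J)
    (h : Fin I → ℝ → ℝ)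
    (hcont : ∀ i, Continuous (h i))
    (hnonneg : ∀ i x, 0 ≤ h i x)
    (hmono : ∀ i, Monotone (h i))
    (htop : ∀ i, Filter.Tendsto (h i) Filter.atTop Filter.atTop)
    (hzero : ∀ i, ∃ x, h i x = 0)
    (hxle : ∀ i, xstar (h i) ≤ 0)
    (G : Fin J → Finset (Fin I))
    (hGinj : Function.Injective G)
    (hGne : ∀ j, (G j).Nonempty)
    (hGcover : ∀ i, ∃ j, i ∈ G j)
    (t : ℝ) (ht : 0 ≤ t) :
    ∃! F : Fin I → ℝ, IsGreatestMS I J h G t F :=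
  existsUnique_greatest' I J hI hJ h hcont hnonneg hmono htop hzero hxle G hGinj hGne hGcover t ht
end

section
/- Assume there exist constants 0 < c < C < ∞ such that c·(y − x) ≤ h_i(y) − h_i(x) ≤ C·(y − x) for all i ∈ 𝐈 and all x, y with x*_i ≤ x ≤ y. Then the mapping F : [0,∞) → ℝ^I, where F(t) is the ⪕-greatest element of A_t, is Lipschitz continuous on [0,∞). -/
lemma argmin_exists {n : ℕ} (hn : 0 < n) (v : Fin n → ℝ) : ∃ i, ∀ j, v i ≤ v j := by
  have : Nonempty (Fin n) := ⟨⟨0, hn⟩⟩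
  obtain ⟨i, -, hi⟩ := Finset.exists_min_image Finset.univ v ⟨this.some, Finset.mem_univ _⟩
  exact ⟨i, fun j => hi j (Finset.mem_univ j)⟩

lemma minval_le_s10 {n : ℕ} [Nonempty (Fin n)] (v : Fin n → ℝ) (i : Fin n) : minval v ≤ v i :=
  ciInf_le (Set.Finite.bddBelow (Set.finite_range v)) i

lemma minval_eq {n : ℕ} [Nonempty (Fin n)] (v : Fin n → ℝ) (i : Fin n) (hi : ∀ j, v i ≤ v j) :
    minval v = v i :=
  le_antisymm (minval_le_s10 v i) (le_ciInf hi)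

lemma mem_argminSet {n : ℕ} {v : Fin n → ℝ} {i : Fin n} : i ∈ argminSet v ↔ ∀ j, v i ≤ v j := by
  simp [argminSet]

lemma argminSet_val {n : ℕ} [Nonempty (Fin n)] {v : Fin n → ℝ} {i : Fin n} (hi : i ∈ argminSet v) :
    v i = minval v := (minval_eq v i (mem_argminSet.mp hi)).symm


lemma lemX : ∀ (n : ℕ) (v w : Fin n → ℝ) (γ : ℝ),
    (∀ i, v i ≠ w i → γ ≤ w i) → (∀ i, v i ≠ w i → γ < v i) →
    (∃ i, w i = γ ∧ γ < v i) → ¬ msLE n v w := by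
  intro n
  induction n using Nat.strong_induction_on with
  | _ n IH =>
    rcases n with _ | _ | m
    · rintro v w γ - - ⟨i, -⟩ -
      exact i.elim0
    · rintro v w γ h1 h2 ⟨i, hw, hv⟩ hle
      rw [msLE] at hle
      have hi : i = 0 := Fin.fin_one_eq_zero i
      rw [hi] at hw hv
      linarith
    · intro v w γ h1 h2 h3 hle
      obtain ⟨i0, hwi0, hvi0⟩ := h3
      have hne : v i0 ≠ w i0 := by rw [hwi0]; exact ne_of_gt hvi0
      have hminw : minval w ≤ γ := hwi0 ▸ minval_le_s10 w i0
      rw [msLE] at hle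
      rcases hle with heq | hlt | ⟨heq, hsub⟩ | ⟨heq, hSeq, -, hrec⟩
      · exact hne (congrFun heq i0)
      · -- minval v < minval w
        obtain ⟨i1, hi1⟩ := argmin_exists (by omega) v
        have hv1 : v i1 = minval v := (minval_eq v i1 hi1).symm
        by_cases hd : v i1 = w i1
        · have : minval w ≤ v i1 := hd ▸ minval_le_s10 w i1
          rw [hv1] at this; linarith
        · have := h2 i1 hd
          rw [hv1] at this
          linarith
      · -- Argmin w ⊂ Argmin v
        obtain ⟨i1, hi1v, hi1w⟩ := Finset.exists_of_ssubset hsub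
        have hv1 : v i1 = minval v := argminSet_val hi1v
        have hd : v i1 ≠ w i1 := by
          intro hcontra
          exact hi1w (mem_argminSet.mpr (fun j => by
            rw [← hcontra, hv1, heq]; exact minval_le_s10 w j))
        have := h2 i1 hd
        rw [hv1] at this
        linarith
      · -- recurse
        set S := argminSet v with hS
        have hi0S : i0 ∉ S := by
          intro hmem
          have : v i0 = minval v := argminSet_val hmem
          rw [this] at hvi0
          linarith [heq ▸ hvi0]
        have hi0c : i0 ∈ Sᶜ := Finset.mem_compl.mpr hi0S
        have hSne : S.Nonempty := by
          obtain ⟨i1, hi1⟩ := argmin_exists (by omega) v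
          exact ⟨i1, mem_argminSet.mpr hi1⟩
        have hcard : (Sᶜ).card < m + 2 := by
          have h2' : (Sᶜ).card = Fintype.card (Fin (m+2)) - S.card := Finset.card_compl _
          have := Finset.card_pos.mpr hSne
          simp only [Fintype.card_fin] at h2'
          omega
        obtain ⟨k0, hk0⟩ := (Sᶜ.orderIsoOfFin rfl).surjective ⟨i0, hi0c⟩
        refine IH (Sᶜ).card hcard (restrictVec Sᶜ v) (restrictVec Sᶜ w) γ ?_ ?_ ?_ hrec
        · intro k hk; exact h1 _ hk
        · intro k hk; exact h2 _ hk
        · refine ⟨k0, ?_, ?_⟩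
          · show w (Sᶜ.orderIsoOfFin rfl k0).1 = γ
            rw [hk0]; exact hwi0
          · show γ < v (Sᶜ.orderIsoOfFin rfl k0).1
            rw [hk0]; exact hvi0

lemma xstar_zero (f : ℝ → ℝ) (hc : Continuous f) (hnn : ∀ x, 0 ≤ f x)
    (ht : Filter.Tendsto f Filter.atTop Filter.atTop) (hz : ∃ x, f x = 0) :
    f (xstar f) = 0 := by
  have hcl : IsClosed {x | f x = 0} := isClosed_eq hc continuous_const
  obtain ⟨B, hB⟩ := Filter.eventually_atTop.mp (ht.eventually_ge_atTop 1)
  have hbdd : BddAbove {x | f x = 0} := by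
    refine ⟨B, fun x hx => ?_⟩
    by_contra hxB
    have := hB x (le_of_not_ge hxB)
    simp only [Set.mem_setOf_eq] at hx
    · linarith
  have := hcl.csSup_mem hz hbdd
  exact this

lemma f_zero_of_le_xstar (f : ℝ → ℝ) (hc : Continuous f) (hnn : ∀ x, 0 ≤ f x)
    (hm : Monotone f) (ht : Filter.Tendsto f Filter.atTop Filter.atTop) (hz : ∃ x, f x = 0)
    {x : ℝ} (hx : x ≤ xstar f) : f x = 0 :=
  le_antisymm (by calc f x ≤ f (xstar f) := hm hx
                    _ = 0 := xstar_zero f hc hnn ht hz) (hnn x)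

section main

variable {I J : ℕ} {h : Fin I → ℝ → ℝ} {G : Fin J → Finset (Fin I)}

lemma lb_of_greatest (hI : 0 < I)
    (hcont : ∀ i, Continuous (h i))
    (hnonneg : ∀ i x, 0 ≤ h i x)
    (hmono : ∀ i, Monotone (h i))
    (htop : ∀ i, Filter.Tendsto (h i) Filter.atTop Filter.atTop)
    (hzero : ∀ i, ∃ x, h i x = 0)
    (hxle : ∀ i, xstar (h i) ≤ 0)
    {u : ℝ} (hu : 0 ≤ u) {x : Fin I → ℝ} (hx : IsGreatestMS I J h G u x)
    (i : Fin I) : xstar (h i) ≤ x i := by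
  by_contra hlt
  push_neg at hlt
  set x' := Function.update x i (xstar (h i)) with hx'
  have hzi : h i (x i) = 0 :=
    f_zero_of_le_xstar (h i) (hcont i) (hnonneg i) (hmono i) (htop i) (hzero i) hlt.le
  have hzxi : h i (xstar (h i)) = 0 :=
    xstar_zero (h i) (hcont i) (hnonneg i) (htop i) (hzero i)
  have hsame : ∀ k, h k (x' k) = h k (x k) := by
    intro k
    by_cases hk : k = i
    · subst hk; simp [hx', hzi, hzxi]
    · simp [hx', Function.update_of_ne hk]
  have hmem : x' ∈ admissible I J h G u := by
    constructor
    · intro k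
      by_cases hk : k = i
      · subst hk; simp only [hx', Function.update_self]; linarith [hxle k]
      · simp only [hx', Function.update_of_ne hk]; exact hx.1.1 k
    · intro j
      calc ∑ k ∈ G j, h k (x' k) = ∑ k ∈ G j, h k (x k) :=
            Finset.sum_congr rfl (fun k _ => hsame k)
        _ ≤ u := hx.1.2 j
  refine lemX I x' x (x i) ?_ ?_ ?_ (hx.2 x' hmem)
  · intro k hk
    by_cases hki : k = i
    · subst hki; exact le_refl _
    · simp [hx', Function.update_of_ne hki] at hk
  · intro k hk
    by_cases hki : k = i
    · subst hki; simpa [hx'] using hlt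
    · simp [hx', Function.update_of_ne hki] at hk
  · exact ⟨i, rfl, by simpa [hx'] using hlt⟩

lemma improve (hI : 0 < I)
    (hcont : ∀ i, Continuous (h i))
    (hnonneg : ∀ i x, 0 ≤ h i x)
    (hmono : ∀ i, Monotone (h i))
    (hGcover : ∀ i, ∃ j, i ∈ G j)
    {c Cc : ℝ} (hc : 0 < c)
    (hgrowth : ∀ i, ∀ x y : ℝ, xstar (h i) ≤ x → x ≤ y →
      c * (y - x) ≤ h i y - h i x ∧ h i y - h i x ≤ Cc * (y - x))
    {u : ℝ} (hu : 0 ≤ u) {x : Fin I → ℝ} (hx : IsGreatestMS I J h G u x)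
    (i0 : Fin I) (hcap : x i0 < u)
    (S : Finset (Fin I)) (hi0S : i0 ∉ S)
    (τ : Fin I → ℝ)
    (hτ1 : ∀ k ∈ S, xstar (h k) ≤ τ k)
    (hτ2 : ∀ k ∈ S, τ k < x k)
    (hτ3 : ∀ k ∈ S, x i0 < τ k)
    (htight : ∀ j, i0 ∈ G j → (∑ i ∈ G j, h i (x i)) = u → ∃ k, k ∈ S ∧ k ∈ G j) :
    False := by
  classical
  set γ := x i0 with hγ
  set x' : Fin I → ℝ := fun k => if k ∈ S then τ k else x k with hx'
  have hx'le : ∀ k, x' k ≤ x k := by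
    intro k; by_cases hk : k ∈ S
    · simp [hx', hk]; exact (hτ2 k hk).le
    · simp [hx', hk]
  have hhx'le : ∀ k, h k (x' k) ≤ h k (x k) := fun k => hmono k (hx'le k)
  have hi0x' : x' i0 = γ := by simp [hx', hi0S, hγ]
  -- groups containing i0
  set Js : Finset (Fin J) := Finset.univ.filter (fun j => i0 ∈ G j) with hJs
  have hJsne : Js.Nonempty := by
    obtain ⟨j, hj⟩ := hGcover i0
    exact ⟨j, by simp [hJs, hj]⟩
  have hslack : ∀ j ∈ Js, (∑ k ∈ G j, h k (x' k)) < u := by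
    intro j hj
    have hij : i0 ∈ G j := by simpa [hJs] using hj
    rcases lt_or_eq_of_le (hx.1.2 j) with hlt | heq
    · exact lt_of_le_of_lt (Finset.sum_le_sum (fun k _ => hhx'le k)) hlt
    · obtain ⟨k, hkS, hkG⟩ := htight j hij heq
      have hdrop : c * (x k - τ k) ≤ h k (x k) - h k (x' k) := by
        have := (hgrowth k (τ k) (x k) (hτ1 k hkS) (hτ2 k hkS).le).1
        simpa [hx', hkS] using this
      have hpos : 0 < c * (x k - τ k) := mul_pos hc (by linarith [hτ2 k hkS])
      have hsum : c * (x k - τ k) ≤ ∑ i ∈ G j, (h i (x i) - h i (x' i)) :=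
        le_trans hdrop (Finset.single_le_sum (f := fun i => h i (x i) - h i (x' i))
          (fun i _ => sub_nonneg.mpr (hhx'le i)) hkG)
      have : ∑ i ∈ G j, h i (x' i) = (∑ i ∈ G j, h i (x i)) - ∑ i ∈ G j, (h i (x i) - h i (x' i)) := by
        rw [Finset.sum_sub_distrib]; ring
      rw [this, heq]
      linarith
  -- minimal slack
  set σ := Js.inf' hJsne (fun j => u - ∑ k ∈ G j, h k (x' k)) with hσ
  have hσpos : 0 < σ := by
    rw [hσ, Finset.lt_inf'_iff]
    intro j hj
    linarith [hslack j hj]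
  -- choose ε by continuity
  have hca : ContinuousAt (h i0) γ := (hcont i0).continuousAt
  obtain ⟨δ, hδpos, hδ⟩ := Metric.continuousAt_iff.mp hca σ hσpos
  set ε := min (δ/2) ((u - γ)/2) with hε
  have hεpos : 0 < ε := by
    apply lt_min
    · linarith
    · linarith
  have hεlt : h i0 (γ + ε) - h i0 γ < σ := by
    have hd : dist (γ + ε) γ < δ := by
      rw [Real.dist_eq]
      have : ε ≤ δ/2 := min_le_left _ _
      rw [abs_of_nonneg (by linarith)]
      linarith
    have := hδ hd
    rw [Real.dist_eq] at this
    have := abs_lt.mp this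
    linarith [this.1, this.2]
  set x'' := Function.update x' i0 (γ + ε) with hx''
  have hx''mem : x'' ∈ admissible I J h G u := by
    constructor
    · intro k
      by_cases hk : k = i0
      · subst hk
        simp only [hx'', Function.update_self]
        have : ε ≤ (u - γ)/2 := min_le_right _ _
        linarith
      · simp only [hx'', Function.update_of_ne hk]
        exact le_trans (hx'le k) (hx.1.1 k)
    · intro j
      by_cases hij : i0 ∈ G j
      · have hsplit : ∑ k ∈ G j, h k (x'' k)
            = h i0 (x'' i0) + ∑ k ∈ (G j).erase i0, h k (x'' k) :=
          (Finset.add_sum_erase _ _ hij).symm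
        have hsplit' : ∑ k ∈ G j, h k (x' k)
            = h i0 (x' i0) + ∑ k ∈ (G j).erase i0, h k (x' k) :=
          (Finset.add_sum_erase _ _ hij).symm
        have herase : ∑ k ∈ (G j).erase i0, h k (x'' k) = ∑ k ∈ (G j).erase i0, h k (x' k) := by
          refine Finset.sum_congr rfl (fun k hk => ?_)
          have : k ≠ i0 := Finset.ne_of_mem_erase hk
          rw [hx'', Function.update_of_ne this]
        have hσj : σ ≤ u - ∑ k ∈ G j, h k (x' k) :=
          Finset.inf'_le _ (by simp [hJs, hij])
        have : h i0 (x'' i0) = h i0 (γ + ε) := by rw [hx'', Function.update_self]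
        rw [hsplit, herase, this]
        rw [hsplit', hi0x'] at hσj
        linarith
      · have : ∑ k ∈ G j, h k (x'' k) = ∑ k ∈ G j, h k (x' k) := by
          refine Finset.sum_congr rfl (fun k hk => ?_)
          have : k ≠ i0 := fun hh => hij (hh ▸ hk)
          rw [hx'', Function.update_of_ne this]
        rw [this]
        exact le_trans (Finset.sum_le_sum (fun k _ => hhx'le k)) (hx.1.2 j)
  refine lemX I x'' x γ ?_ ?_ ?_ (hx.2 x'' hx''mem)
  · intro k hk
    by_cases hki : k = i0
    · subst hki; exact le_refl _
    · by_cases hkS : k ∈ S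
      · exact (hτ3 k hkS).le.trans (hτ2 k hkS).le
      · exfalso; apply hk; rw [hx'', Function.update_of_ne hki]; simp [hx', hkS]
  · intro k hk
    by_cases hki : k = i0
    · subst hki; rw [hx'', Function.update_self]; linarith
    · by_cases hkS : k ∈ S
      · rw [hx'', Function.update_of_ne hki]
        simpa [hx', hkS] using hτ3 k hkS
      · exfalso; apply hk; rw [hx'', Function.update_of_ne hki]; simp [hx', hkS]
  · exact ⟨i0, rfl, by rw [hx'', Function.update_self]; linarith⟩

end main

section step

variable {I J : ℕ} {h : Fin I → ℝ → ℝ} {G : Fin J → Finset (Fin I)}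

lemma key_step (hI : 0 < I)
    (hcont : ∀ i, Continuous (h i))
    (hnonneg : ∀ i x, 0 ≤ h i x)
    (hmono : ∀ i, Monotone (h i))
    (htop : ∀ i, Filter.Tendsto (h i) Filter.atTop Filter.atTop)
    (hzero : ∀ i, ∃ x, h i x = 0)
    (hxle : ∀ i, xstar (h i) ≤ 0)
    (hGcover : ∀ i, ∃ j, i ∈ G j)
    {c Cc : ℝ} (hc : 0 < c) (hC : 0 < Cc)
    (hgrowth : ∀ i, ∀ x y : ℝ, xstar (h i) ≤ x → x ≤ y →
      c * (y - x) ≤ h i y - h i x ∧ h i y - h i x ≤ Cc * (y - x))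
    {s t : ℝ} (hs : 0 ≤ s) (hst : s ≤ t)
    {a b : Fin I → ℝ}
    (ha : IsGreatestMS I J h G s a) (hb : IsGreatestMS I J h G t b)
    {M' : ℝ} (hM' : 0 ≤ M') (i0 : Fin I)
    (IH : ∀ k, min (a k) (b k) < min (a i0) (b i0) → |b k - a k| ≤ M' * (t - s)) :
    |b i0 - a i0| ≤ ((1 + Cc * I * M') / c + 1) * (t - s) := by
  classical
  have ht : 0 ≤ t := le_trans hs hst
  have hts : 0 ≤ t - s := by linarith
  set M1 := (1 + Cc * I * M') / c + 1 with hM1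
  have hCIM : 0 ≤ Cc * I * M' := by positivity
  have hcM1 : c * M1 = 1 + Cc * I * M' + c := by
    rw [hM1]; field_simp
  have hM1one : 1 ≤ M1 := by
    rw [hM1]
    have : 0 < (1 + Cc * I * M') / c := by positivity
    linarith
  have hM1nn : 0 ≤ M1 := by linarith
  have lbA : ∀ i, xstar (h i) ≤ a i :=
    lb_of_greatest hI hcont hnonneg hmono htop hzero hxle hs ha
  have lbB : ∀ i, xstar (h i) ≤ b i :=
    lb_of_greatest hI hcont hnonneg hmono htop hzero hxle ht hb
  have hbound : 0 ≤ Cc * M' * (t - s) := by positivity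
  rcases lt_trichotomy (b i0) (a i0) with blt | beq | alt
  · -- Case A : b i0 < a i0
    set γ := b i0 with hγ
    have hmin : min (a i0) (b i0) = γ := min_eq_right blt.le
    by_cases hgood : ∀ j, i0 ∈ G j → (∑ i ∈ G j, h i (b i)) = t →
        ∃ k, k ∈ G j ∧ h k (a k) < h k (b k) ∧ γ < b k
    · exfalso
      refine improve hI hcont hnonneg hmono hGcover hc hgrowth ht hb i0
        (lt_of_lt_of_le blt (le_trans (ha.1.1 i0) hst))
        (Finset.univ.filter (fun k => h k (a k) < h k (b k) ∧ γ < b k)) ?_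
        (fun k => max (a k) ((b k + γ)/2)) ?_ ?_ ?_ ?_
      · simp only [Finset.mem_filter, Finset.mem_univ, true_and, not_and]
        intro hcon
        exact absurd hcon (not_lt.mpr (hmono i0 blt.le))
      · intro k hk
        exact le_trans (lbA k) (le_max_left _ _)
      · intro k hk
        simp only [Finset.mem_filter, Finset.mem_univ, true_and] at hk
        have hab : a k < b k := by
          by_contra hcon
          exact absurd hk.1 (not_lt.mpr (hmono k (not_lt.mp hcon)))
        exact max_lt hab (by linarith [hk.2])
      · intro k hk
        simp only [Finset.mem_filter, Finset.mem_univ, true_and] at hk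
        have : γ < (b k + γ)/2 := by linarith [hk.2]
        exact lt_of_lt_of_le this (le_max_right _ _)
      · intro j hij htt
        obtain ⟨k, hkG, hk1, hk2⟩ := hgood j hij htt
        exact ⟨k, by simp [hk1, hk2], hkG⟩
    · push_neg at hgood
      obtain ⟨j, hij, htt, hbad⟩ := hgood
      have hfa : (∑ i ∈ G j, h i (a i)) ≤ s := ha.1.2 j
      have hterm : ∀ k ∈ (G j).erase i0, h k (b k) - h k (a k) ≤ Cc * M' * (t - s) := by
        intro k hk
        have hkG : k ∈ G j := Finset.mem_of_mem_erase hk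
        by_cases hlt : h k (a k) < h k (b k)
        · have hbγ : b k ≤ γ := hbad k hkG hlt
          have hab : a k < b k := by
            by_contra hcon
            exact absurd hlt (not_lt.mpr (hmono k (not_lt.mp hcon)))
          have hminlt : min (a k) (b k) < min (a i0) (b i0) := by
            rw [hmin, min_eq_left hab.le]
            exact lt_of_lt_of_le hab hbγ
          have hIH := IH k hminlt
          have habs : b k - a k ≤ M' * (t - s) := le_trans (le_abs_self _) hIH
          have hgr := (hgrowth k (a k) (b k) (lbA k) hab.le).2
          calc h k (b k) - h k (a k) ≤ Cc * (b k - a k) := hgr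
            _ ≤ Cc * (M' * (t - s)) := mul_le_mul_of_nonneg_left habs hC.le
            _ = Cc * M' * (t - s) := by ring
        · linarith [not_lt.mp hlt]
      have hda := Finset.add_sum_erase (G j) (fun k => h k (a k)) hij
      have hdb := Finset.add_sum_erase (G j) (fun k => h k (b k)) hij
      have hsum1 : ∑ k ∈ (G j).erase i0, (h k (b k) - h k (a k))
          ≤ (I : ℝ) * (Cc * M' * (t - s)) := by
        have h1 := Finset.sum_le_card_nsmul ((G j).erase i0) _ _ hterm
        rw [nsmul_eq_mul] at h1
        refine le_trans h1 ?_
        have hcard : ((((G j).erase i0).card : ℕ) : ℝ) ≤ (I : ℝ) := by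
          have h2 := Finset.card_le_univ ((G j).erase i0)
          simp only [Finset.card_univ, Fintype.card_fin] at h2
          exact_mod_cast h2
        exact mul_le_mul_of_nonneg_right hcard hbound
      have hsum2 : ∑ k ∈ (G j).erase i0, (h k (b k) - h k (a k))
          = (∑ k ∈ (G j).erase i0, h k (b k)) - ∑ k ∈ (G j).erase i0, h k (a k) :=
        Finset.sum_sub_distrib _ _
      have hgr0 := (hgrowth i0 (b i0) (a i0) (lbB i0) blt.le).1
      have hfinal : c * (a i0 - b i0) ≤ (I : ℝ) * (Cc * M' * (t - s)) - (t - s) := by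
        linarith [hsum1, hsum2, hda, hdb, htt, hfa, hgr0]
      rw [abs_sub_comm, abs_of_pos (by linarith : (0:ℝ) < a i0 - b i0)]
      have hmul : c * (a i0 - b i0) ≤ c * (M1 * (t - s)) := by nlinarith [hcM1, hts, hc]
      exact le_of_mul_le_mul_left hmul hc
  · rw [beq]
    simp only [sub_self, abs_zero]
    positivity
  · -- Case B : a i0 < b i0
    set γ := a i0 with hγ
    have hmin : min (a i0) (b i0) = γ := min_eq_left alt.le
    by_cases hedge : s ≤ a i0
    · have has : a i0 = s := le_antisymm (ha.1.1 i0) hedge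
      rw [abs_of_pos (by linarith : (0:ℝ) < b i0 - a i0)]
      have hbt : b i0 ≤ t := hb.1.1 i0
      nlinarith [hM1one, hts]
    · push_neg at hedge
      by_cases hgood : ∀ j, i0 ∈ G j → (∑ i ∈ G j, h i (a i)) = s →
          ∃ k, k ∈ G j ∧ h k (b k) < h k (a k) ∧ γ ≤ b k
      · exfalso
        refine improve hI hcont hnonneg hmono hGcover hc hgrowth hs ha i0 hedge
          (Finset.univ.filter (fun k => h k (b k) < h k (a k) ∧ γ ≤ b k)) ?_
          (fun k => max (b k) ((a k + γ)/2)) ?_ ?_ ?_ ?_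
        · simp only [Finset.mem_filter, Finset.mem_univ, true_and, not_and]
          intro hcon
          exact absurd hcon (not_lt.mpr (hmono i0 alt.le))
        · intro k hk
          exact le_trans (lbB k) (le_max_left _ _)
        · intro k hk
          simp only [Finset.mem_filter, Finset.mem_univ, true_and] at hk
          have hba : b k < a k := by
            by_contra hcon
            exact absurd hk.1 (not_lt.mpr (hmono k (not_lt.mp hcon)))
          have hγa : γ < a k := lt_of_le_of_lt hk.2 hba
          exact max_lt hba (by linarith)
        · intro k hk
          simp only [Finset.mem_filter, Finset.mem_univ, true_and] at hk
          have hba : b k < a k := by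
            by_contra hcon
            exact absurd hk.1 (not_lt.mpr (hmono k (not_lt.mp hcon)))
          have hγa : γ < a k := lt_of_le_of_lt hk.2 hba
          have hmid : γ < (a k + γ)/2 := by linarith
          exact lt_of_lt_of_le hmid (le_max_right _ _)
        · intro j hij htt
          obtain ⟨k, hkG, hk1, hk2⟩ := hgood j hij htt
          exact ⟨k, by simp [hk1, hk2], hkG⟩
      · push_neg at hgood
        obtain ⟨j, hij, htt, hbad⟩ := hgood
        have hfb : (∑ i ∈ G j, h i (b i)) ≤ t := hb.1.2 j
        have hterm : ∀ k ∈ (G j).erase i0, h k (a k) - h k (b k) ≤ Cc * M' * (t - s) := by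
          intro k hk
          have hkG : k ∈ G j := Finset.mem_of_mem_erase hk
          by_cases hlt : h k (b k) < h k (a k)
          · have hbγ : b k < γ := hbad k hkG hlt
            have hba : b k < a k := by
              by_contra hcon
              exact absurd hlt (not_lt.mpr (hmono k (not_lt.mp hcon)))
            have hminlt : min (a k) (b k) < min (a i0) (b i0) := by
              rw [hmin, min_eq_right hba.le]
              exact hbγ
            have hIH := IH k hminlt
            have habs : a k - b k ≤ M' * (t - s) := by
              have h3 := le_abs_self (a k - b k)
              rw [abs_sub_comm] at h3
              linarith
            have hgr := (hgrowth k (b k) (a k) (lbB k) hba.le).2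
            calc h k (a k) - h k (b k) ≤ Cc * (a k - b k) := hgr
              _ ≤ Cc * (M' * (t - s)) := mul_le_mul_of_nonneg_left habs hC.le
              _ = Cc * M' * (t - s) := by ring
          · linarith [not_lt.mp hlt]
        have hda := Finset.add_sum_erase (G j) (fun k => h k (a k)) hij
        have hdb := Finset.add_sum_erase (G j) (fun k => h k (b k)) hij
        have hsum1 : ∑ k ∈ (G j).erase i0, (h k (a k) - h k (b k))
            ≤ (I : ℝ) * (Cc * M' * (t - s)) := by
          have h1 := Finset.sum_le_card_nsmul ((G j).erase i0) _ _ hterm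
          rw [nsmul_eq_mul] at h1
          refine le_trans h1 ?_
          have hcard : ((((G j).erase i0).card : ℕ) : ℝ) ≤ (I : ℝ) := by
            have h2 := Finset.card_le_univ ((G j).erase i0)
            simp only [Finset.card_univ, Fintype.card_fin] at h2
            exact_mod_cast h2
          exact mul_le_mul_of_nonneg_right hcard hbound
        have hsum2 : ∑ k ∈ (G j).erase i0, (h k (a k) - h k (b k))
            = (∑ k ∈ (G j).erase i0, h k (a k)) - ∑ k ∈ (G j).erase i0, h k (b k) :=
          Finset.sum_sub_distrib _ _
        have hgr0 := (hgrowth i0 (a i0) (b i0) (lbA i0) alt.le).1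
        have hfinal : c * (b i0 - a i0) ≤ (I : ℝ) * (Cc * M' * (t - s)) + (t - s) := by
          linarith [hsum1, hsum2, hda, hdb, htt, hfb, hgr0]
        rw [abs_of_pos (by linarith : (0:ℝ) < b i0 - a i0)]
        have hmul : c * (b i0 - a i0) ≤ c * (M1 * (t - s)) := by nlinarith [hcM1, hts, hc]
        exact le_of_mul_le_mul_left hmul hc

end step


/-- Theorem 2 of the paper: under the two-sided linear growth condition
`c (y - x) ≤ h_i(y) - h_i(x) ≤ C (y - x)` for `x*_i ≤ x ≤ y`, the mapping `F` is
Lipschitz continuous on `[0, ∞)`. -/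
theorem F_lipschitz
    (I J : ℕ) (hI : 0 < I) (hJ : 0 < J)
    (h : Fin I → ℝ → ℝ)
    (hcont : ∀ i, Continuous (h i))
    (hnonneg : ∀ i x, 0 ≤ h i x)
    (hmono : ∀ i, Monotone (h i))
    (htop : ∀ i, Filter.Tendsto (h i) Filter.atTop Filter.atTop)
    (hzero : ∀ i, ∃ x, h i x = 0)
    (hxle : ∀ i, xstar (h i) ≤ 0)
    (G : Fin J → Finset (Fin I))
    (hGinj : Function.Injective G)
    (hGne : ∀ j, (G j).Nonempty)
    (hGcover : ∀ i, ∃ j, i ∈ G j)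
    (c C : ℝ) (hc : 0 < c) (hcC : c < C)
    (hgrowth : ∀ i, ∀ x y : ℝ, xstar (h i) ≤ x → x ≤ y →
      c * (y - x) ≤ h i y - h i x ∧ h i y - h i x ≤ C * (y - x))
    (F : ℝ → Fin I → ℝ)
    (hF : ∀ t : ℝ, 0 ≤ t → IsGreatestMS I J h G t (F t)) :
    ∃ K : NNReal, LipschitzOnWith K F (Set.Ici 0) := by
  classical
  have hC' : 0 < C := lt_trans hc hcC
  set Mr : ℕ → ℝ := fun n => Nat.rec ((1 + C * (I:ℝ) * 0) / c + 1)
    (fun _ M => (1 + C * (I:ℝ) * M) / c + 1) n with hMr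
  have hMrsucc : ∀ n, Mr (n+1) = (1 + C * (I:ℝ) * Mr n) / c + 1 := fun n => rfl
  have hMrnn : ∀ n, 0 ≤ Mr n := by
    intro n
    induction n with
    | zero =>
      show (0:ℝ) ≤ (1 + C * (I:ℝ) * 0) / c + 1
      positivity
    | succ n ih =>
      rw [hMrsucc]
      positivity
  have key : ∀ s t : ℝ, 0 ≤ s → s ≤ t → ∀ i, |F t i - F s i| ≤ Mr I * (t - s) := by
    intro s t hs hst
    have ha := hF s hs
    have hb := hF t (hs.trans hst)
    set a := F s with hadef
    set b := F t with hbdef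
    have main : ∀ n : ℕ, ∀ i : Fin I,
        (Finset.univ.filter (fun k => min (a k) (b k) < min (a i) (b i))).card ≤ n →
        |b i - a i| ≤ Mr n * (t - s) := by
      intro n
      induction n with
      | zero =>
        intro i hrank
        refine key_step hI hcont hnonneg hmono htop hzero hxle hGcover hc hC' hgrowth
          hs hst ha hb (le_refl (0:ℝ)) i ?_
        intro k hk
        exfalso
        have hmem : k ∈ Finset.univ.filter (fun k => min (a k) (b k) < min (a i) (b i)) :=
          Finset.mem_filter.mpr ⟨Finset.mem_univ _, hk⟩
        have := Finset.card_pos.mpr ⟨k, hmem⟩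
        omega
      | succ n ih =>
        intro i hrank
        refine key_step hI hcont hnonneg hmono htop hzero hxle hGcover hc hC' hgrowth
          hs hst ha hb (hMrnn n) i ?_
        intro k hk
        apply ih k
        have hsub : Finset.univ.filter (fun m => min (a m) (b m) < min (a k) (b k))
            ⊂ Finset.univ.filter (fun m => min (a m) (b m) < min (a i) (b i)) := by
          rw [Finset.ssubset_def]
          constructor
          · intro m hm
            simp only [Finset.mem_filter, Finset.mem_univ, true_and] at hm ⊢
            exact lt_trans hm hk
          · intro hcon
            have hkk := hcon (Finset.mem_filter.mpr ⟨Finset.mem_univ _, hk⟩)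
            simp only [Finset.mem_filter, Finset.mem_univ, true_and] at hkk
            exact lt_irrefl _ hkk
        have := Finset.card_lt_card hsub
        omega
    intro i
    refine main I i ?_
    calc (Finset.univ.filter (fun k => min (a k) (b k) < min (a i) (b i))).card
        ≤ Finset.univ.card := Finset.card_filter_le _ _
      _ = I := by rw [Finset.card_univ, Fintype.card_fin]
  refine ⟨(Mr I).toNNReal, ?_⟩
  rw [lipschitzOnWith_iff_dist_le_mul]
  intro x hx y hy
  have hcoe : ((Mr I).toNNReal : ℝ) = Mr I := Real.coe_toNNReal _ (hMrnn I)
  rw [hcoe]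
  have hgen : ∀ x y : ℝ, 0 ≤ x → x ≤ y → dist (F x) (F y) ≤ Mr I * dist x y := by
    intro x y hx hxy
    have hd : dist x y = y - x := by
      rw [Real.dist_eq, abs_sub_comm, abs_of_nonneg (by linarith)]
    rw [hd]
    refine dist_pi_le_iff (mul_nonneg (hMrnn I) (by linarith)) |>.mpr ?_
    intro i
    rw [Real.dist_eq, abs_sub_comm]
    exact key x y hx hxy i
  rcases le_total x y with hxy | hyx
  · exact hgen x y (Set.mem_Ici.mp hx) hxy
  · rw [dist_comm, dist_comm x y]
    exact hgen y x (Set.mem_Ici.mp hy) hyx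
end
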